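/- Let S be a decision rule system. Then h_EAR(S) ≥ β(S), where β(S) is the minimum cardinality of a node cover of the hypergraph G(S). -/

import Mathlib

/-! Formalization of decision rule systems and decision trees
(Durdymyradov & Moshkov, "Greedy Algorithm for Inference of Decision Trees
from Decision Rule Systems"). -/

/-- Values of attributes: `some δ` is a natural number value, `none` is the
special symbol `*` (interpreted as a value not occurring in the system). -/
abbrev Val := Option ℕ

/-- A decision rule `(a_{i₁}=δ₁) ∧ ⋯ ∧ (a_{iₘ}=δₘ) → σ`: the left-hand side
is a finite set of equations (attribute, value), the right-hand side a decision. -/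
structure Rule where
  lhs : Finset (ℕ × ℕ)
  rhs : ℕ
deriving DecidableEq

namespace Rule

/-- `A(r)`: the set of attributes of a rule. -/
def attrs (r : Rule) : Finset ℕ := r.lhs.image Prod.fst

/-- `K(r)`: the equation system of the left-hand side of a rule. -/
def K (r : Rule) : Finset (ℕ × Val) := r.lhs.image (fun p => (p.1, some p.2))

/-- the length of a rule -/
def len (r : Rule) : ℕ := r.lhs.card

/-- A rule is wellformed if the attributes in its left-hand side are pairwise
different, i.e. each attribute carries at most one equation. -/
def WF (r : Rule) : Prop := ∀ p ∈ r.lhs, ∀ q ∈ r.lhs, p.1 = q.1 → p = q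

end Rule

/-- `A(S)`: the set of attributes of a system of decision rules. -/
def attrsS (S : Finset Rule) : Finset ℕ := S.biUnion Rule.attrs

/-- `n(S) = |A(S)|`. -/
def nS (S : Finset Rule) : ℕ := (attrsS S).card

/-- `d(S)`: maximum length of a rule of `S`. -/
def dS (S : Finset Rule) : ℕ := S.sup Rule.len

/-- `V_S(a)`: the set of values δ such that the equation `a = δ` occurs in `S`. -/
def VS (S : Finset Rule) (a : ℕ) : Finset ℕ :=
  S.biUnion (fun r => (r.lhs.filter (fun p => p.1 = a)).image Prod.snd)

/-- `EV_S(a) = V_S(a) ∪ {*}`. -/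
def EVS (S : Finset Rule) (a : ℕ) : Finset Val := insert none ((VS S a).image some)

/-- `k(S) = max{|V_S(a)| : a ∈ A(S)}`. -/
def kS (S : Finset Rule) : ℕ := (attrsS S).sup (fun a => (VS S a).card)

/-- A (wellformed) decision rule system: a finite nonempty set of wellformed rules. -/
def SysWF (S : Finset Rule) : Prop := S.Nonempty ∧ ∀ r ∈ S, r.WF

/-- An equation system is consistent if it does not assign two different values
to the same attribute. -/
def Consistent (E : Finset (ℕ × Val)) : Prop :=
  ∀ p ∈ E, ∀ q ∈ E, p.1 = q.1 → p.2 = q.2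

instance : DecidablePred Consistent := fun E => by unfold Consistent; infer_instance

/-- `r_α`: the rule obtained from `r` by deleting from its left-hand side all
equations belonging to `α`. -/
def Rule.restrict (r : Rule) (α : Finset (ℕ × Val)) : Rule :=
  ⟨r.lhs.filter (fun p => ((p.1, (some p.2 : Val)) ∉ α)), r.rhs⟩

/-- `S_α`: the set of rules `r_α` for `r ∈ S` with `K(r) ∪ α` consistent. -/
def sysRestrict (S : Finset Rule) (α : Finset (ℕ × Val)) : Finset Rule :=
  (S.filter (fun r => Consistent (r.K ∪ α))).image (fun r => r.restrict α)

/-- Extended decision trees: terminal nodes are labeled with sets of rules, and a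
working node is labeled with an attribute and has one child for each value
(only the children corresponding to values in `EV_S(a)` are relevant). -/
inductive DT where
  | leaf (τ : Finset Rule) : DT
  | node (a : ℕ) (c : Val → DT) : DT

/-- `Γ` is an extended decision tree over `S`: working nodes are labeled with
attributes of `A(S)` (with edges labeled by the elements of `EV_S(a)`),
terminal nodes with subsets of `S`. -/
def DT.Over (S : Finset Rule) : DT → Prop
  | .leaf τ => τ ⊆ S
  | .node a c => a ∈ attrsS S ∧ ∀ v ∈ EVS S a, DT.Over S (c v)

/-- `h(Γ)`: the maximum number of working nodes in a complete path of `Γ`. -/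
def DT.depth (S : Finset Rule) : DT → ℕ
  | .leaf _ => 0
  | .node a c => 1 + (EVS S a).sup (fun v => DT.depth S (c v))

/-- The number of terminal nodes of `Γ`. -/
def DT.numLeaves (S : Finset Rule) : DT → ℕ
  | .leaf _ => 1
  | .node a c => ∑ v ∈ EVS S a, DT.numLeaves S (c v)

/-- `Γ` solves `EAR(S)` starting from the already accumulated equation system `E`:
for every complete path `ξ` with consistent `K(ξ)`, every rule of the terminal
label `τ(ξ)` satisfies `K(r) ⊆ K(ξ)`, and every other rule of `S` has
`K(r) ∪ K(ξ)` inconsistent. -/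
def DT.SolvesFrom (S : Finset Rule) : DT → Finset (ℕ × Val) → Prop
  | .leaf τ, E => Consistent E →
      (∀ r ∈ τ, r.K ⊆ E) ∧ ∀ r ∈ S, r ∉ τ → ¬ Consistent (r.K ∪ E)
  | .node a c, E => ∀ v ∈ EVS S a, DT.SolvesFrom S (c v) (insert (a, v) E)

/-- `Γ` is a decision tree over `S` solving the problem `EAR(S)`. -/
def DT.SolvesEAR (S : Finset Rule) (Γ : DT) : Prop := Γ.Over S ∧ Γ.SolvesFrom S ∅

/-- `h_EAR(S)`: the minimum depth of a decision tree over `S` solving `EAR(S)`. -/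
noncomputable def hEAR (S : Finset Rule) : ℕ :=
  sInf {n | ∃ Γ : DT, DT.SolvesEAR S Γ ∧ DT.depth S Γ = n}

/-- A node cover of the hypergraph `G(S)`. -/
def IsNodeCover (S : Finset Rule) (B : Finset ℕ) : Prop :=
  B ⊆ attrsS S ∧ ∀ r ∈ S, r.attrs.Nonempty → (r.attrs ∩ B).Nonempty

/-- `β(S)`: the minimum cardinality of a node cover of `G(S)`. -/
noncomputable def betaS (S : Finset Rule) : ℕ :=
  sInf {k | ∃ B : Finset ℕ, IsNodeCover S B ∧ B.card = k}

/-- `M` is a possible choice of `S^max`: a set of rules of `S` of length `d(S)`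
containing exactly one representative from each equivalence class
(`r₁ ∼ r₂ iff K(r₁) = K(r₂)`) of the set of rules of length `d(S)`, and
no other rules. -/
def IsMaxSet (S M : Finset Rule) : Prop :=
  (∀ r ∈ M, r ∈ S ∧ r.len = dS S) ∧
  (∀ r ∈ S, r.len = dS S → ∃ r' ∈ M, r'.K = r.K) ∧
  (∀ r₁ ∈ M, ∀ r₂ ∈ M, r₁.K = r₂.K → r₁ = r₂)

/-- `δ̄ ∈ EV(S)`, a tuple represented as a function on attributes. -/
def InEV (S : Finset Rule) (f : ℕ → Val) : Prop := ∀ a ∈ attrsS S, f a ∈ EVS S a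

/-- `K(S, δ̄)`. -/
def KofTuple (S : Finset Rule) (f : ℕ → Val) : Finset (ℕ × Val) :=
  (attrsS S).image (fun a => (a, f a))

/-- The rule `r` is realizable for the tuple `δ̄`, i.e. `K(r) ⊆ K(S, δ̄)`. -/
def Realizable (S : Finset Rule) (f : ℕ → Val) (r : Rule) : Prop :=
  r.K ⊆ KofTuple S f

instance (S : Finset Rule) (f : ℕ → Val) : DecidablePred (Realizable S f) :=
  fun r => by unfold Realizable; infer_instance

/-! ### Auxiliary lemmas for Lemma 2 -/

lemma mem_attrs_of_mem_K {r : Rule} {p : ℕ × Val} (hp : p ∈ r.K) : p.1 ∈ r.attrs := by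
  simp only [Rule.K, Finset.mem_image] at hp
  obtain ⟨x, hx, rfl⟩ := hp
  exact Finset.mem_image.2 ⟨x, hx, rfl⟩

lemma attrs_subset_attrsS {S : Finset Rule} {r : Rule} (hr : r ∈ S) :
    r.attrs ⊆ attrsS S := fun a ha => Finset.mem_biUnion.2 ⟨r, hr, ha⟩

lemma consistent_K_of_WF {r : Rule} (h : r.WF) : Consistent r.K := by
  intro p hp q hq h1
  simp only [Rule.K, Finset.mem_image] at hp hq
  obtain ⟨x, hx, rfl⟩ := hp
  obtain ⟨y, hy, rfl⟩ := hq
  simp only at h1 ⊢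
  rw [h x hx y hy h1]

/-- A tree querying all attributes in the list `l`, ending with the set of
rules whose premise is contained in the accumulated equations. -/
def fullTree (S : Finset Rule) : List ℕ → Finset (ℕ × Val) → DT
  | [], E => .leaf (S.filter (fun r => r.K ⊆ E))
  | a :: l, E => .node a (fun v => fullTree S l (insert (a, v) E))

lemma fullTree_over (S : Finset Rule) :
    ∀ (l : List ℕ) (E : Finset (ℕ × Val)), (∀ a ∈ l, a ∈ attrsS S) →
      (fullTree S l E).Over S
  | [], E, _ => by
      simp only [fullTree, DT.Over]
      exact Finset.filter_subset _ _
  | a :: l, E, h => by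
      refine ⟨h a (List.mem_cons_self), fun v _ => ?_⟩
      exact fullTree_over S l (insert (a, v) E) (fun b hb => h b (List.mem_cons_of_mem a hb))

lemma fullTree_solves (S : Finset Rule) :
    ∀ (l : List ℕ) (E : Finset (ℕ × Val)),
      (∀ a ∈ attrsS S, a ∈ l ∨ ∃ v, (a, v) ∈ E) →
      (fullTree S l E).SolvesFrom S E
  | [], E, h => by
      intro _hE
      constructor
      · intro r hr
        exact (Finset.mem_filter.1 hr).2
      · intro r hr hrn hcon
        have hns : ¬ (r.K ⊆ E) := fun hsub => hrn (Finset.mem_filter.2 ⟨hr, hsub⟩)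
        obtain ⟨p, hp, hpE⟩ := Finset.not_subset.1 hns
        have hpa : p.1 ∈ attrsS S := attrs_subset_attrsS hr (mem_attrs_of_mem_K hp)
        rcases h p.1 hpa with h' | ⟨v, hv⟩
        · exact absurd h' List.not_mem_nil
        · have hne : (p.1, v) ≠ p := by
            intro hEq
            exact hpE (hEq ▸ hv)
          have := hcon p (Finset.mem_union_left _ hp) (p.1, v) (Finset.mem_union_right _ hv) rfl
          exact hne (Prod.ext_iff.2 ⟨rfl, this.symm⟩)
  | a :: l, E, h => by
      intro v _hv
      refine fullTree_solves S l (insert (a, v) E) (fun b hb => ?_)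
      rcases h b hb with h' | ⟨w, hw⟩
      · rcases List.mem_cons.1 h' with rfl | h''
        · exact Or.inr ⟨v, Finset.mem_insert_self _ _⟩
        · exact Or.inl h''
      · exact Or.inr ⟨w, Finset.mem_insert_of_mem hw⟩

lemma cover_of_tree (S : Finset Rule) (hWF : ∀ r ∈ S, r.WF) :
    ∀ (Γ : DT) (E : Finset (ℕ × Val)), Γ.Over S → Γ.SolvesFrom S E →
      (∀ p ∈ E, p.2 = (none : Val)) →
      ∃ B : Finset ℕ, B.card ≤ Γ.depth S ∧ B ⊆ attrsS S ∧
        ∀ r ∈ S, r.attrs.Nonempty →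
          (r.attrs ∩ B).Nonempty ∨ ∃ p ∈ r.K, ∃ q ∈ E, p.1 = q.1 := by
  intro Γ
  induction Γ with
  | leaf τ =>
      intro E _hover hsolve hE
      have hcons : Consistent E := by
        intro p hp q hq _
        rw [hE p hp, hE q hq]
      obtain ⟨h1, h2⟩ := hsolve hcons
      refine ⟨∅, by simp [DT.depth], Finset.empty_subset _, fun r hr hrne => ?_⟩
      have hrτ : r ∉ τ := by
        intro hmem
        obtain ⟨x, hx⟩ := (Finset.image_nonempty.1 hrne)
        have hxK : (x.1, (some x.2 : Val)) ∈ r.K :=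
          Finset.mem_image.2 ⟨x, hx, rfl⟩
        have := hE _ (h1 r hmem hxK)
        simp at this
      have hnc := h2 r hr hrτ
      simp only [Consistent, not_forall] at hnc
      obtain ⟨p, hp, q, hq, heq, hneq⟩ := hnc
      rcases Finset.mem_union.1 hp with hpK | hpE
      · rcases Finset.mem_union.1 hq with hqK | hqE
        · exact absurd (consistent_K_of_WF (hWF r hr) p hpK q hqK heq) hneq
        · exact Or.inr ⟨p, hpK, q, hqE, heq⟩
      · rcases Finset.mem_union.1 hq with hqK | hqE
        · exact Or.inr ⟨q, hqK, p, hpE, heq.symm⟩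
        · exact absurd ((hE p hpE).trans (hE q hqE).symm) hneq
  | node a c ih =>
      intro E hover hsolve hE
      obtain ⟨ha, hc⟩ := hover
      have hnone : (none : Val) ∈ EVS S a := Finset.mem_insert_self _ _
      have hE' : ∀ p ∈ insert (a, (none : Val)) E, p.2 = (none : Val) := by
        intro p hp
        rcases Finset.mem_insert.1 hp with rfl | hp'
        · rfl
        · exact hE p hp'
      obtain ⟨B', hcard, hsub, hcov⟩ :=
        ih none (insert (a, none) E) (hc none hnone) (hsolve none hnone) hE'
      have hle : DT.depth S (c none) ≤ (EVS S a).sup (fun v => DT.depth S (c v)) :=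
        Finset.le_sup (f := fun v => DT.depth S (c v)) hnone
      refine ⟨insert a B', ?_, ?_, ?_⟩
      · calc (insert a B').card ≤ B'.card + 1 := Finset.card_insert_le _ _
          _ ≤ DT.depth S (DT.node a c) := by
              simp only [DT.depth]; omega
      · intro b hb
        rcases Finset.mem_insert.1 hb with rfl | hb'
        · exact ha
        · exact hsub hb'
      · intro r hr hrne
        rcases hcov r hr hrne with ⟨x, hx⟩ | ⟨p, hp, q, hq, heq⟩
        · obtain ⟨hx1, hx2⟩ := Finset.mem_inter.1 hx
          exact Or.inl ⟨x, Finset.mem_inter.2 ⟨hx1, Finset.mem_insert_of_mem hx2⟩⟩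
        · rcases Finset.mem_insert.1 hq with rfl | hq'
          · refine Or.inl ⟨a, Finset.mem_inter.2 ⟨?_, Finset.mem_insert_self _ _⟩⟩
            have := mem_attrs_of_mem_K hp
            rwa [heq] at this
          · exact Or.inr ⟨p, hp, q, hq', heq⟩

/-- Lemma 2: For any decision rule system `S`, `h_EAR(S) ≥ β(S)`, where `β(S)`
is the minimum cardinality of a node cover of the hypergraph `G(S)`. -/
theorem betaS_le_hEAR (S : Finset Rule) (hS : SysWF S) :
    betaS S ≤ hEAR S := by
  have hset : {n | ∃ Γ : DT, DT.SolvesEAR S Γ ∧ DT.depth S Γ = n}.Nonempty := by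
    refine ⟨_, fullTree S (attrsS S).toList ∅, ⟨?_, ?_⟩, rfl⟩
    · exact fullTree_over S _ _ (fun a ha => Finset.mem_toList.1 ha)
    · exact fullTree_solves S _ _ (fun a ha => Or.inl (Finset.mem_toList.2 ha))
  have hmem := Nat.sInf_mem hset
  obtain ⟨Γ, ⟨hover, hsolve⟩, hdepth⟩ := hmem
  obtain ⟨B, hcard, hsub, hcov⟩ :=
    cover_of_tree S hS.2 Γ ∅ hover hsolve (fun p hp => absurd hp (Finset.notMem_empty p))
  have hNC : IsNodeCover S B := by
    refine ⟨hsub, fun r hr hrne => ?_⟩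
    rcases hcov r hr hrne with h | ⟨_, _, q, hq, _⟩
    · exact h
    · exact absurd hq (Finset.notMem_empty q)
  calc betaS S ≤ B.card := Nat.sInf_le ⟨B, hNC, rfl⟩
    _ ≤ Γ.depth S := hcard
    _ = hEAR S := hdepth
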